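/- Let 𝔡 be a finite-dimensional real vector space, let X₁, …, X_d ∈ 𝔡 span 𝔡 over ℝ, let λ₁, …, λ_d ∈ ℝ, let π : ℝᵈ → 𝔡 be the surjective linear map with π(e_j) = X_j, and let Z := { z ∈ ℂᵈ : Σ_{j=1}^d (|z_j|² + λ_j) Y_j = 0 for every Y ∈ ker π }. If there exists μ ∈ 𝔡* with ⟨μ, X_j⟩ > λ_j for all j = 1, …, d, then there exists z ∈ Z with z_j ≠ 0 for every j; moreover, for any such z the stabilizer of z under the coordinatewise rotation action of the torus Tᵈ = ℝᵈ/ℤᵈ on ℂᵈ (given by θ • z = (e^{2πiθ_1} z_1, …, e^{2πiθ_d} z_d)) is trivial. (This is the step in the proof of the extended Delzant theorem showing that the level set Ψ⁻¹(0) contains points where the Tᵈ-action is free, whence the induced quasitorus action on the reduced space is effective.) -/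

import Mathlib

/-- If the polyhedral set `Δ = {μ ∈ 𝔡* : ⟨μ, X_j⟩ ≥ λ_j}` has an interior point
(some `μ` with `⟨μ, X_j⟩ > λ_j` for all `j`), then the zero level set `Z` of the
moment map of `N = ker (Tᵈ → D)` contains points with all coordinates nonzero, and
at any such point the stabilizer of the standard coordinatewise-rotation action of
`Tᵈ = ℝᵈ/ℤᵈ` on `ℂᵈ` is trivial: `θ • z = z` forces every `θ_j` to be an integer. -/
theorem delzant_free_point
    {𝔡 : Type*} [AddCommGroup 𝔡] [Module ℝ 𝔡] [FiniteDimensional ℝ 𝔡]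
    {d : ℕ} (X : Fin d → 𝔡) (hspan : Submodule.span ℝ (Set.range X) = ⊤)
    (lam : Fin d → ℝ)
    (proj : (Fin d → ℝ) →ₗ[ℝ] 𝔡) (hproj : ∀ j, proj (Pi.single j 1) = X j)
    (Z : Set (Fin d → ℂ))
    (hZ : Z = {z | ∀ Y ∈ LinearMap.ker proj,
      ∑ j, (‖z j‖ ^ 2 + lam j) * Y j = 0})
    (μ : Module.Dual ℝ 𝔡) (hμ : ∀ j, lam j < μ (X j)) :
    (∃ z ∈ Z, ∀ j, z j ≠ 0) ∧
    (∀ z ∈ Z, (∀ j, z j ≠ 0) → ∀ θ : Fin d → ℝ,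
      (∀ j, Complex.exp (2 * Real.pi * Complex.I * (θ j)) * z j = z j) →
      ∀ j, ∃ k : ℤ, θ j = (k : ℝ)) := by
  subst hZ
  constructor
  · refine ⟨fun j => (Real.sqrt (μ (X j) - lam j) : ℂ), ?_, ?_⟩
    · intro Y hY
      have habs : ∀ j, ‖((Real.sqrt (μ (X j) - lam j) : ℂ))‖ ^ 2 + lam j
          = μ (X j) := by
        intro j
        rw [Complex.norm_real, Real.norm_eq_abs, abs_of_nonneg (Real.sqrt_nonneg _),
          Real.sq_sqrt (by linarith [hμ j])]
        ring
      simp only [habs]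
      have hYz : μ (proj Y) = 0 := by
        rw [LinearMap.mem_ker.mp hY, map_zero]
      have hrep : Y = ∑ j, Y j • (Pi.single j 1 : Fin d → ℝ) := by
        ext i
        simp [Pi.single_apply, Finset.sum_apply]
      calc ∑ j, μ (X j) * Y j = μ (proj Y) := by
            conv_rhs => rw [hrep]
            rw [map_sum, map_sum]
            simp [hproj, mul_comm]
        _ = 0 := hYz
    · intro j
      simp only [ne_eq, Complex.ofReal_eq_zero]
      exact Real.sqrt_ne_zero'.mpr (by linarith [hμ j])
  · intro z _ hz θ hθ j
    have h1 : Complex.exp (2 * Real.pi * Complex.I * (θ j)) = 1 :=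
      mul_right_cancel₀ (hz j) (by rw [one_mul]; exact hθ j)
    obtain ⟨n, hn⟩ := Complex.exp_eq_one_iff.mp h1
    refine ⟨n, ?_⟩
    have h2πI : (2 * Real.pi * Complex.I) ≠ 0 := by
      simp [Real.pi_ne_zero, Complex.I_ne_zero]
    have : ((θ j : ℂ)) = (n : ℂ) := by
      apply mul_left_cancel₀ h2πI
      rw [hn]; ring
    exact_mod_cast this
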